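/- Let G be a directed graph with nonnegative arc weights, let c, f, f' be vertices, and let P(c,f) and P(c,f') be the sets of all shortest (minimum total weight) directed paths from c to f and from c to f', respectively. Then no path in P(c,f) shares an arc with any path in P(c,f') if and only if no path in P(c,f) shares a vertex other than c with any path in P(c,f'). -/

import Mathlib

/-- `IsDiPath A a b p` asserts that the list of vertices `p` is a simple directed
path from `a` to `b` in the directed graph with arc relation `A`. -/
def IsDiPath {V : Type*} (A : V → V → Prop) (a b : V) (p : List V) : Prop :=
  p.head? = some a ∧ p.getLast? = some b ∧ List.Chain' A p ∧ p.Nodup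

/-- The arcs traversed by a path: the list of consecutive pairs of vertices. -/
def pathArcs {V : Type*} (p : List V) : List (V × V) :=
  p.zip p.tail

/-- The total weight of a path: the sum of the weights of its arcs. -/
def pathWeight {V : Type*} (w : V → V → ℝ) (p : List V) : ℝ :=
  ((p.zip p.tail).map fun e => w e.1 e.2).sum

/-- `p` is a shortest (minimum total weight) directed path from `a` to `b`. -/
def IsShortestDiPath {V : Type*} (A : V → V → Prop) (w : V → V → ℝ) (a b : V)
    (p : List V) : Prop :=
  IsDiPath A a b p ∧ ∀ q, IsDiPath A a b q → pathWeight w p ≤ pathWeight w q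

namespace SPAux
open List

variable {V : Type*}

lemma pathWeight_cons_cons (w : V → V → ℝ) (a b : V) (l : List V) :
    pathWeight w (a :: b :: l) = w a b + pathWeight w (b :: l) := by
  simp [pathWeight]

lemma pathWeight_split (w : V → V → ℝ) :
    ∀ (s : List V) (x : V) (t : List V),
      pathWeight w (s ++ x :: t) = pathWeight w (s ++ [x]) + pathWeight w (x :: t)
  | [], x, t => by simp [pathWeight]
  | [a], x, t => by simp [pathWeight_cons_cons, pathWeight]
  | a :: b :: s, x, t => by
    have ih := pathWeight_split w (b :: s) x t
    simp only [cons_append, pathWeight_cons_cons] at *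
    rw [ih]; ring

lemma pathWeight_nonneg {A : V → V → Prop} {w : V → V → ℝ}
    (hw : ∀ x y, A x y → 0 ≤ w x y) :
    ∀ {p : List V}, Chain' A p → 0 ≤ pathWeight w p
  | [], _ => le_of_eq rfl
  | [a], _ => le_of_eq (by simp [pathWeight])
  | a :: b :: l, h => by
    rw [pathWeight_cons_cons]
    rcases isChain_cons_cons.mp h with ⟨hab, hrest⟩
    have := pathWeight_nonneg hw hrest
    have := hw a b hab
    linarith

lemma exists_dup_decomp : ∀ {l : List V}, ¬ l.Nodup →
    ∃ (a : V) (l1 l2 l3 : List V), l = l1 ++ a :: (l2 ++ a :: l3)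
  | [], h => absurd nodup_nil h
  | x :: t, h => by
    by_cases hx : x ∈ t
    · obtain ⟨s, t', rfl⟩ := List.append_of_mem hx
      exact ⟨x, [], s, t', rfl⟩
    · have : ¬ t.Nodup := fun hn => h (nodup_cons.mpr ⟨hx, hn⟩)
      obtain ⟨a, l1, l2, l3, rfl⟩ := exists_dup_decomp this
      exact ⟨a, x :: l1, l2, l3, rfl⟩

lemma exists_last_satisfying (P : V → Prop) :
    ∀ {l : List V}, (∃ x ∈ l, P x) →
      ∃ l1 x l2, l = l1 ++ x :: l2 ∧ P x ∧ ∀ y ∈ l2, ¬ P y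
  | [], h => by simp at h
  | a :: t, h => by
    by_cases ht : ∃ x ∈ t, P x
    · obtain ⟨l1, x, l2, heq, hx, hl2⟩ := exists_last_satisfying P ht
      exact ⟨a :: l1, x, l2, by rw [heq]; rfl, hx, hl2⟩
    · have ha : P a := by
        obtain ⟨x, hx, hPx⟩ := h
        rcases mem_cons.mp hx with rfl | hx
        · exact hPx
        · exact absurd ⟨x, hx, hPx⟩ ht
      exact ⟨[], a, t, rfl, ha, fun y hy hPy => ht ⟨y, hy, hPy⟩⟩

lemma mem_pathArcs_cons {e : V × V} {m : List V} (a : V) (hm : m ≠ [])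
    (h : e ∈ pathArcs m) : e ∈ pathArcs (a :: m) := by
  cases m with
  | nil => exact absurd rfl hm
  | cons b t => simpa [pathArcs] using Or.inr (by simpa [pathArcs] using h)

lemma mem_pathArcs (u v : V) : ∀ (s t : List V), (u, v) ∈ pathArcs (s ++ u :: v :: t)
  | [], t => by simp [pathArcs]
  | a :: s, t => by
    have := mem_pathArcs u v s t
    exact mem_pathArcs_cons a (by simp) this

lemma exists_simple_path {A : V → V → Prop} {w : V → V → ℝ}
    (hw : ∀ x y, A x y → 0 ≤ w x y) (a b : V) :
    ∀ p : List V, p.head? = some a → p.getLast? = some b → Chain' A p →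
      ∃ q, IsDiPath A a b q ∧ pathWeight w q ≤ pathWeight w p := by
  have key : ∀ n (p : List V), p.length ≤ n → p.head? = some a → p.getLast? = some b →
      Chain' A p → ∃ q, IsDiPath A a b q ∧ pathWeight w q ≤ pathWeight w p := by
    intro n
    induction n with
    | zero =>
      intro p hl hh _ _
      have : p = [] := List.length_eq_zero_iff.mp (Nat.le_zero.mp hl)
      subst this; simp at hh
    | succ n ih =>
      intro p hl hh hlast hch
      by_cases hnd : p.Nodup
      · exact ⟨p, ⟨hh, hlast, hch, hnd⟩, le_refl _⟩
      · obtain ⟨x, l1, l2, l3, rfl⟩ := exists_dup_decomp hnd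
        set p' : List V := l1 ++ x :: l3 with hp'
        have hlen : p'.length ≤ n := by
          simp only [hp', List.length_append, List.length_cons] at hl ⊢
          omega
        have hh' : p'.head? = some a := by
          rw [hp', head?_append]
          rwa [head?_append] at hh
        have hsome : ((x :: l3).getLast?).isSome := by
          simp [List.getLast?_isSome]
        have hlast' : p'.getLast? = some b := by
          have e1 : (l1 ++ x :: (l2 ++ x :: l3)).getLast? = (x :: l3).getLast? := by
            have : l1 ++ x :: (l2 ++ x :: l3) = (l1 ++ x :: l2) ++ x :: l3 := by
              simp
            rw [this, getLast?_append, Option.or_of_isSome hsome]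
          have e2 : p'.getLast? = (x :: l3).getLast? := by
            rw [hp', getLast?_append, Option.or_of_isSome hsome]
          rw [e2, ← e1, hlast]
        have hch1 := isChain_append.mp hch
        obtain ⟨hc1, hc2, hJ⟩ := hch1
        have hc2' : Chain' A ((x :: l2) ++ x :: l3) := by
          exact hc2
        obtain ⟨hcx2, hcx3, hJ2⟩ := isChain_append.mp hc2'
        have hch' : Chain' A p' := by
          rw [hp']
          exact isChain_append.mpr ⟨hc1, hcx3, by simpa using hJ⟩
        have hwmid : 0 ≤ pathWeight w ((x :: l2) ++ [x]) := by
          refine pathWeight_nonneg hw ?_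
          exact isChain_append.mpr ⟨hcx2, isChain_singleton x, by simpa using hJ2⟩
        have hwle : pathWeight w p' ≤ pathWeight w (l1 ++ x :: (l2 ++ x :: l3)) := by
          have e1 : pathWeight w (l1 ++ x :: (l2 ++ x :: l3)) =
              pathWeight w (l1 ++ [x]) + pathWeight w (x :: (l2 ++ x :: l3)) :=
            pathWeight_split w l1 x (l2 ++ x :: l3)
          have e2 : pathWeight w (x :: (l2 ++ x :: l3)) =
              pathWeight w ((x :: l2) ++ [x]) + pathWeight w (x :: l3) := by
            have := pathWeight_split w (x :: l2) x l3
            simpa using this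
          have e3 : pathWeight w p' = pathWeight w (l1 ++ [x]) + pathWeight w (x :: l3) :=
            pathWeight_split w l1 x l3
          rw [e1, e2, e3]; linarith
        obtain ⟨q, hq, hqw⟩ := ih p' hlen hh' hlast' hch'
        exact ⟨q, hq, le_trans hqw hwle⟩
  intro p hh hlast hch
  exact key p.length p le_rfl hh hlast hch

lemma prefix_shortest {A : V → V → Prop} {w : V → V → ℝ}
    (hw : ∀ x y, A x y → 0 ≤ w x y) {c f v : V} {p1 p2 : List V}
    (hp : IsShortestDiPath A w c f (p1 ++ v :: p2)) :
    ∀ s, IsDiPath A c v s → pathWeight w (p1 ++ [v]) ≤ pathWeight w s := by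
  intro s hs
  obtain ⟨hsh, hsl, hsc, hsn⟩ := hs
  obtain ⟨⟨hph, hpl, hpc, hpn⟩, hpmin⟩ := hp
  have hsne : s ≠ [] := by rintro rfl; simp at hsh
  have hsdecomp : s.dropLast ++ [v] = s := by
    have h1 : s.dropLast ++ [s.getLast hsne] = s := List.dropLast_append_getLast hsne
    have h2 : s.getLast hsne = v := by
      have := List.getLast?_eq_getLast hsne
      rw [this] at hsl; exact (Option.some_inj.mp hsl)
    rwa [h2] at h1
  set dl := s.dropLast with hdl
  obtain ⟨hpc1, hpc2, hpJ⟩ := isChain_append.mp hpc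
  have hsc' : Chain' A (dl ++ [v]) := by rwa [hsdecomp]
  obtain ⟨hdc, -, hdJ⟩ := isChain_append.mp hsc'
  have hsomevp2 : ((v :: p2).getLast?).isSome := by simp [List.getLast?_isSome]
  have ht0h : (dl ++ v :: p2).head? = some c := by
    have : s.head? = (dl ++ [v]).head? := by rw [hsdecomp]
    rw [this, head?_append] at hsh
    rwa [head?_append]
  have ht0l : (dl ++ v :: p2).getLast? = some f := by
    rw [getLast?_append, Option.or_of_isSome hsomevp2]
    rw [getLast?_append, Option.or_of_isSome hsomevp2] at hpl
    exact hpl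
  have ht0c : Chain' A (dl ++ v :: p2) :=
    isChain_append.mpr ⟨hdc, hpc2, by simpa using hdJ⟩
  obtain ⟨q, hq, hqw⟩ := exists_simple_path hw c f (dl ++ v :: p2) ht0h ht0l ht0c
  have h1 := hpmin q hq
  have e1 : pathWeight w (p1 ++ v :: p2) = pathWeight w (p1 ++ [v]) + pathWeight w (v :: p2) :=
    pathWeight_split w p1 v p2
  have e2 : pathWeight w (dl ++ v :: p2) = pathWeight w s + pathWeight w (v :: p2) := by
    rw [pathWeight_split w dl v p2, hsdecomp]
  rw [e1] at h1
  rw [e2] at hqw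
  linarith

end SPAux

open List in
/-- For shortest-path sets `P(c,f)` and `P(c,f')` in a nonnegatively
arc-weighted digraph: no path in `P(c,f)` shares an arc with any path in `P(c,f')`
iff no path in `P(c,f)` shares a vertex other than `c` with any path in `P(c,f')`. -/
theorem shortest_path_sets_arc_disjoint_iff_vertex_disjoint
    {V : Type*} (A : V → V → Prop) (w : V → V → ℝ)
    (hw : ∀ x y, A x y → 0 ≤ w x y)
    (c f f' : V) :
    (∀ p q, IsShortestDiPath A w c f p → IsShortestDiPath A w c f' q →
      ∀ e ∈ pathArcs p, e ∉ pathArcs q) ↔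
    (∀ p q, IsShortestDiPath A w c f p → IsShortestDiPath A w c f' q →
      ∀ v ∈ p, v ∈ q → v = c) := by
  classical
  constructor
  · -- arc-disjoint → vertex-disjoint
    intro h p q hp hq v hvp hvq
    by_contra hvc
    obtain ⟨q1, v', q2, hq_eq, ⟨hv'p, hv'c⟩, hlast⟩ :=
      SPAux.exists_last_satisfying (fun x => x ∈ p ∧ x ≠ c) ⟨v, hvq, hvp, hvc⟩
    subst hq_eq
    obtain ⟨p1, p2, hp_eq⟩ := List.append_of_mem hv'p
    subst hp_eq
    obtain ⟨⟨hph, hpl, hpc, hpn⟩, hpmin⟩ := hp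
    obtain ⟨⟨hqh, hql, hqc, hqn⟩, hqmin⟩ := hq
    -- q1 starts with c
    obtain ⟨q1', rfl⟩ : ∃ q1', q1 = c :: q1' := by
      cases q1 with
      | nil => simp at hqh; exact absurd hqh hv'c
      | cons a t =>
        have hac : a = c := by simpa using hqh
        exact ⟨t, by rw [hac]⟩
    -- p1 nonempty, ends with u
    have hp1ne : p1 ≠ [] := by
      rintro rfl
      simp at hph
      exact hv'c hph
    obtain ⟨u, p1', rfl⟩ : ∃ u p1', p1 = p1' ++ [u] := by
      refine ⟨p1.getLast hp1ne, p1.dropLast, (List.dropLast_append_getLast hp1ne).symm⟩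
    -- c ∉ q2
    have hcq2 : c ∉ q2 := by
      have hdisj := (nodup_append.mp hqn).2.2
      intro hc
      exact hdisj c mem_cons_self c (mem_cons_of_mem v' hc) rfl
    -- chain facts about p
    obtain ⟨hpc1, hpc2, hpJ⟩ := isChain_append.mp hpc
    -- chain facts about q
    obtain ⟨hqc1, hqc2, hqJ⟩ := isChain_append.mp hqc
    -- the prefix of q is a dipath from c to v'
    have hqpre : IsDiPath A c v' ((c :: q1') ++ [v']) := by
      refine ⟨by simp, List.getLast?_concat, ?_, ?_⟩
      · exact isChain_append.mpr ⟨hqc1, isChain_singleton v', by simpa using hqJ⟩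
      · have : ((c :: q1') ++ [v']) <+ ((c :: q1') ++ v' :: q2) := by
          have : ((c :: q1') ++ [v']) ++ q2 = (c :: q1') ++ v' :: q2 := by simp
          rw [← this]
          exact List.sublist_append_left _ _
        exact hqn.sublist this
    -- the prefix of p (to v') is a shortest c→v' path
    have hple : pathWeight w ((p1' ++ [u]) ++ [v']) ≤ pathWeight w ((c :: q1') ++ [v']) :=
      SPAux.prefix_shortest hw ⟨⟨hph, hpl, hpc, hpn⟩, hpmin⟩ _ hqpre
    -- the mixed path r
    set r : List V := (p1' ++ [u]) ++ v' :: q2 with hr_def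
    have hsomevq2 : ((v' :: q2).getLast?).isSome := by simp [List.getLast?_isSome]
    have hsomevp2 : ((v' :: p2).getLast?).isSome := by simp [List.getLast?_isSome]
    have hp1some : ((p1' ++ [u]).head?).isSome := by
      rw [List.isSome_head?]; exact hp1ne
    have hr : IsShortestDiPath A w c f' r := by
      refine ⟨⟨?_, ?_, ?_, ?_⟩, ?_⟩
      · rw [hr_def, head?_append, Option.or_of_isSome hp1some]
        rw [head?_append, Option.or_of_isSome hp1some] at hph
        exact hph
      · rw [hr_def, getLast?_append, Option.or_of_isSome hsomevq2]
        rw [getLast?_append, Option.or_of_isSome hsomevq2] at hql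
        exact hql
      · exact isChain_append.mpr ⟨hpc1, hqc2, by simpa using hpJ⟩
      · refine nodup_append.mpr ⟨(nodup_append.mp hpn).1, (nodup_append.mp hqn).2.1, ?_⟩
        intro x hx1 b hx2 hxb
        rw [← hxb] at hx2
        have hxp : x ∈ (p1' ++ [u]) ++ v' :: p2 := mem_append_left _ hx1
        rcases mem_cons.mp hx2 with rfl | hxq2
        · exact (nodup_append.mp hpn).2.2 x hx1 x mem_cons_self rfl
        · have := hlast x hxq2
          push_neg at this
          have hxc : x = c := this hxp
          exact hcq2 (hxc ▸ hxq2)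
      · intro t ht
        have e1 : pathWeight w r =
            pathWeight w ((p1' ++ [u]) ++ [v']) + pathWeight w (v' :: q2) :=
          SPAux.pathWeight_split w (p1' ++ [u]) v' q2
        have e2 : pathWeight w ((c :: q1') ++ v' :: q2) =
            pathWeight w ((c :: q1') ++ [v']) + pathWeight w (v' :: q2) :=
          SPAux.pathWeight_split w (c :: q1') v' q2
        have h2 := hqmin t ht
        rw [e2] at h2
        rw [e1]
        linarith
    -- the shared arc (u, v')
    have harc_p : (u, v') ∈ pathArcs ((p1' ++ [u]) ++ v' :: p2) := by
      have := SPAux.mem_pathArcs u v' p1' p2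
      simpa using this
    have harc_r : (u, v') ∈ pathArcs r := by
      have := SPAux.mem_pathArcs u v' p1' q2
      simpa [hr_def] using this
    exact h _ r ⟨⟨hph, hpl, hpc, hpn⟩, hpmin⟩ hr (u, v') harc_p harc_r
  · -- vertex-disjoint → arc-disjoint
    intro h p q hp hq e hep heq
    obtain ⟨x, y⟩ := e
    have hyp : y ∈ p.tail := (List.of_mem_zip hep).2
    have hyq : y ∈ q := List.mem_of_mem_tail (List.of_mem_zip heq).2
    have hyp' : y ∈ p := List.mem_of_mem_tail hyp
    have hyc : y = c := h p q hp hq y hyp' hyq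
    rw [hyc] at hyp
    obtain ⟨⟨hph, hpl, hpc, hpn⟩, -⟩ := hp
    cases p with
    | nil => simp at hph
    | cons a t =>
      have hac : a = c := by simpa using hph
      rcases nodup_cons.mp hpn with ⟨hat, -⟩
      rw [hac] at hat
      exact hat (by simpa using hyp)
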